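/- Let Λ_C = ⊕_{s∈S} K₀(C)·α_s be the free module over the fusion ring K₀(C), with symmetric K₀(C)-bilinear form B_C(α_s, α_s) = 2·[1], B_C(α_s, α_t) = -[Π(e)] if e = (s,t) is an edge, and 0 otherwise, where FPdim(Π(e)) = 2cos(π/m_{s,t}) (≥ 2 when m_{s,t} = ∞). Then the assignment s·v = v - B_C(α_s, v)·α_s defines a K₀(C)-linear representation of the Coxeter group W on Λ_C, and this representation is faithful. -/

import Mathlib

/-- The Chebyshev-like polynomials Δ_k ∈ ℤ[d] of the second kind:
Δ_0 = 1, Δ_1 = d, Δ_{k+1} = d·Δ_k - Δ_{k-1}. -/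
noncomputable def cheb : ℕ → Polynomial ℤ
  | 0 => 1
  | 1 => Polynomial.X
  | (k + 2) => Polynomial.X * cheb (k + 1) - cheb k

/-- The index set of the Temperley–Lieb–Jones fusion rule:
`Π_a ⊗ Π_b ≅ ⊕ Π_k` over `k = |a-b|, |a-b|+2, …, min (a+b) (2n-4-(a+b))`. -/
def fusSet (n a b : ℕ) : Finset ℕ :=
  (Finset.Icc (max a b - min a b) (min (a + b) (2 * n - 4 - (a + b)))).filter
    (fun k => (a + b + k) % 2 = 0)

/-!
STATEMENT 17: Let Λ_C = ⊕_{s∈S} K₀(C)·α_s be the free module over the fusion ring K₀(C),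
with the symmetric K₀(C)-bilinear form B_C(α_s, α_s) = 2·[1], B_C(α_s, α_t) = -[Π(e)] on
edges and 0 otherwise, where FPdim(Π(e)) = 2cos(π/m_{s,t}) (and ≥ 2 when m_{s,t} = ∞).
Then s·v = v - B_C(α_s, v)·α_s defines a K₀(C)-linear representation of the Coxeter group W
on Λ_C, and this representation is faithful.

Here the fusion ring K₀(C) is modelled by a commutative ring R together with its
Frobenius–Perron dimension ring homomorphism φ : R → ℝ; the form coefficients
c s t = B_C(α_s, α_t) satisfy c s s = 2, symmetry, the Chebyshev relation
Δ_{m_{s,t}-1}(c s t) = 0 (which holds for the classes ±[Π(e)] in the fusion ring K₀(C(Γ))),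
φ(c s t) = -2cos(π/m_{s,t}) for m_{s,t} < ∞, and φ(c s t) ≤ -2 for m_{s,t} = ∞
(encoded as m_{s,t} = 0).
-/

section ReflGen

variable {B : Type*} [Fintype B] [DecidableEq B] {R : Type*} [CommRing R]

/-- The linear functional `v ↦ ∑ t, c s t * v t`. -/
noncomputable def formL (c : B → B → R) (s : B) : (B → R) →ₗ[R] R where
  toFun v := ∑ t, c s t * v t
  map_add' u v := by simp [mul_add, Finset.sum_add_distrib]
  map_smul' r v := by
    simp only [Pi.smul_apply, smul_eq_mul, RingHom.id_apply, Finset.mul_sum]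
    exact Finset.sum_congr rfl fun t _ => by ring

@[simp] lemma formL_apply (c : B → B → R) (s : B) (v : B → R) :
    formL c s v = ∑ t, c s t * v t := rfl

lemma formL_single (c : B → B → R) (s x : B) :
    formL c s (Pi.single x 1) = c s x := by
  simp only [formL_apply]
  rw [Finset.sum_eq_single x]
  · simp
  · intro b _ hb
    rw [Pi.single_eq_of_ne hb, mul_zero]
  · simp

/-- The reflection `v ↦ v - (∑ t, c s t * v t) • α_s` as a linear map. -/
noncomputable def reflMap (c : B → B → R) (s : B) : (B → R) →ₗ[R] (B → R) :=
  LinearMap.id - (formL c s).smulRight (Pi.single s 1)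

lemma reflMap_apply (c : B → B → R) (s : B) (v : B → R) :
    reflMap c s v = v - (∑ t, c s t * v t) • (Pi.single s 1 : B → R) := rfl

lemma reflMap_invol (c : B → B → R) (s : B) (h2 : c s s = 2) (v : B → R) :
    reflMap c s (reflMap c s v) = v := by
  have key : ∀ w : B → R, reflMap c s w = w - formL c s w • (Pi.single s 1 : B → R) :=
    fun _ => rfl
  rw [key, key v, map_sub, map_smul, formL_single, h2]
  simp only [smul_eq_mul, smul_smul]
  module

/-- The reflection as a linear equivalence. -/
noncomputable def reflE (c : B → B → R) (s : B) (h2 : c s s = 2) :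
    (B → R) ≃ₗ[R] (B → R) :=
  LinearEquiv.ofLinear (reflMap c s) (reflMap c s)
    (LinearMap.ext fun v => reflMap_invol c s h2 v)
    (LinearMap.ext fun v => reflMap_invol c s h2 v)

lemma reflE_apply (c : B → B → R) (s : B) (h2 : c s s = 2) (v : B → R) :
    reflE c s h2 v = v - (∑ t, c s t * v t) • (Pi.single s 1 : B → R) := rfl

lemma reflE_sq (c : B → B → R) (s : B) (h2 : c s s = 2) :
    reflE c s h2 * reflE c s h2 = 1 :=
  LinearEquiv.ext fun v => reflMap_invol c s h2 v

end ReflGen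

section Braid

variable {B : Type*} [Fintype B] [DecidableEq B] {R : Type*} [CommRing R]

lemma braid_pow (c : B → B → R) (s t : B) (h2s : c s s = 2) (h2t : c t t = 2)
    (hsy : c t s = c s t) (m : ℕ) (hm : m ≠ 0)
    (hD : Polynomial.aeval (c s t) (cheb (m - 1)) = 0) :
    (reflE c s h2s * reflE c t h2t) ^ m = 1 := by
  set D : ℕ → R := fun k => Polynomial.aeval (c s t) (cheb k) with hDdef
  have hD0 : D 0 = 1 := by simp [hDdef, cheb]
  have hD1 : D 1 = c s t := by simp [hDdef, cheb]
  have hDrec : ∀ k, D (k + 1 + 1) = c s t * D (k + 1) - D k := by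
    intro k
    simp only [hDdef]
    rw [show k + 1 + 1 = k + 2 from rfl, cheb]
    simp
  have cassini : ∀ j, D (j+1)^2 - c s t * D j * D (j+1) + D j ^ 2 = 1 := by
    intro j
    induction j with
    | zero => rw [hD0, hD1]; ring
    | succ j ih => rw [hDrec j]; linear_combination ih
  have ra : ∀ (x : B) (h2 : c x x = 2) (w : B → R),
      reflE c x h2 w = w - formL c x w • (Pi.single x 1 : B → R) := fun _ _ _ => rfl
  set X := reflE c s h2s * reflE c t h2t with hX
  have hXapp : ∀ w : B → R, X w = reflE c s h2s (reflE c t h2t w) := fun _ => rfl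
  have hmul : ∀ (a b : (B → R) ≃ₗ[R] (B → R)) (w : B → R), (a * b) w = a (b w) :=
    fun _ _ _ => rfl
  have key : ∀ (j : ℕ) (v : B → R), (X ^ (j+1)) v =
      v - (D j ^ 2 * formL c s v - D j * D (j+1) * formL c t v) • (Pi.single s 1 : B → R)
        - ((D (j+1) - c s t * D j) * D j * formL c s v + D j ^ 2 * formL c t v) •
            (Pi.single t 1 : B → R) := by
    intro j
    induction j with
    | zero =>
      intro v
      rw [pow_one, hXapp, ra, ra, map_sub, map_smul, formL_single, hD0, hD1]
      simp only [smul_eq_mul]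
      match_scalars <;> ring
    | succ j ih =>
      intro v
      rw [pow_succ', hmul, ih v, hXapp, ra, ra]
      simp only [map_sub, map_smul, formL_single, hsy, h2s, h2t, smul_eq_mul, hDrec j]
      match_scalars
      · ring
      · linear_combination (formL c s v - c s t * formL c t v) * cassini j
      · linear_combination (formL c t v) * cassini j
  apply LinearEquiv.ext
  intro v
  obtain ⟨j, rfl⟩ : ∃ j, m = j + 1 := ⟨m - 1, (Nat.succ_pred_eq_of_pos (Nat.pos_of_ne_zero hm)).symm⟩
  have hDj : D j = 0 := by
    simpa [hDdef] using hD
  rw [key j v, hDj]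
  simp

end Braid

section RealDihedral

variable {B : Type*} [Fintype B] [DecidableEq B]

open Real

/-- The sequence of vectors `τ(π(alternatingWord s t j)) α_s` in the real reflection
representation. -/
noncomputable def dvec (k : B → B → ℝ) (s t : B) : ℕ → (B → ℝ)
  | 0 => Pi.single s 1
  | (j+1) => reflMap k (if Even j then t else s) (dvec k s t j)

lemma sin_rec (θ : ℝ) (a : ℝ) : Real.sin (a + θ) = 2 * Real.cos θ * Real.sin a - Real.sin (a - θ) := by
  rw [Real.sin_add, Real.sin_sub]; ring

lemma dvec_formula_fin (k : B → B → ℝ) (s t : B) (hst : s ≠ t) (m : ℕ) (hm : 2 ≤ m)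
    (h2t : k t t = 2) (h2s : k s s = 2)
    (hkst : k s t = -2 * Real.cos (Real.pi / m)) (hkts : k t s = k s t) (j : ℕ) :
    dvec k s t j =
      (if Even j then Real.sin ((j+1) * (Real.pi / m)) / Real.sin (Real.pi / m)
        else Real.sin (j * (Real.pi / m)) / Real.sin (Real.pi / m)) • (Pi.single s 1 : B → ℝ) +
      (if Even j then Real.sin (j * (Real.pi / m)) / Real.sin (Real.pi / m)
        else Real.sin ((j+1) * (Real.pi / m)) / Real.sin (Real.pi / m)) • (Pi.single t 1 : B → ℝ) := by
  set θ := Real.pi / m with hθ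
  induction j with
  | zero =>
    simp only [dvec, Nat.cast_zero, zero_mul, Real.sin_zero, zero_div, Even.zero, if_true,
      zero_add, one_mul, zero_smul, add_zero]
    have hm0 : 0 < (m:ℝ) := by exact_mod_cast Nat.lt_of_lt_of_le Nat.zero_lt_two hm
    have h : Real.sin θ ≠ 0 := by
      have h1 : 0 < θ := by rw [hθ]; positivity
      have h2 : θ < Real.pi := by
        rw [hθ]
        calc Real.pi / (m:ℝ) ≤ Real.pi / 2 := by
              apply div_le_div_of_nonneg_left Real.pi_pos.le two_pos
              exact_mod_cast hm
          _ < Real.pi := by linarith [Real.pi_gt_three]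
      exact ne_of_gt (Real.sin_pos_of_pos_of_lt_pi h1 h2)
    rw [div_self h, one_smul]
  | succ j ih =>
    have key : ∀ (x : B) (w : B → ℝ), reflMap k x w = w - formL k x w • (Pi.single x 1 : B → ℝ) :=
      fun _ _ => rfl
    have hrec : Real.sin ((j+1+1) * θ) = 2 * Real.cos θ * Real.sin ((j+1) * θ) - Real.sin (j * θ) := by
      have h1 : ((j:ℝ)+1+1) * θ = ((j+1) * θ) + θ := by ring
      have h2 : (j:ℝ) * θ = ((j+1) * θ) - θ := by ring
      rw [h1, h2, sin_rec]
    rcases Nat.even_or_odd j with hj | hj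
    · have hj1 : ¬ Even (j + 1) := by simp [Nat.even_add_one, hj]
      simp only [dvec, hj, if_true, hj1, if_false] at ih ⊢
      rw [ih, key, map_add, map_smul, map_smul, formL_single, formL_single, hkts, hkst, h2t]
      push_cast
      simp only [smul_eq_mul]
      match_scalars
      · ring
      · push_cast at hrec; linear_combination -hrec / Real.sin θ
    · have hj1 : Even (j + 1) := Nat.even_add_one.mpr (Nat.not_even_iff_odd.mpr hj)
      have hj' : ¬ Even j := Nat.not_even_iff_odd.mpr hj
      simp only [dvec, hj', if_false, hj1, if_true] at ih ⊢
      rw [ih, key, map_add, map_smul, map_smul, formL_single, formL_single, hkst, h2s]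
      push_cast
      simp only [smul_eq_mul]
      match_scalars
      · push_cast at hrec; linear_combination -hrec / Real.sin θ
      · ring

end RealDihedral

section RealDihedral2

variable {B : Type*} [Fintype B] [DecidableEq B]

open Real

lemma dvec_ex_fin (k : B → B → ℝ) (s t : B) (hst : s ≠ t) (m : ℕ) (hm : 2 ≤ m)
    (h2t : k t t = 2) (h2s : k s s = 2)
    (hkst : k s t = -2 * Real.cos (Real.pi / m)) (hkts : k t s = k s t) (j : ℕ)
    (hj : j + 1 ≤ m) :
    ∃ a b : ℝ, 0 ≤ a ∧ 0 ≤ b ∧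
      dvec k s t j = a • (Pi.single s 1 : B → ℝ) + b • (Pi.single t 1 : B → ℝ) := by
  have hm0 : 0 < (m:ℝ) := by exact_mod_cast Nat.lt_of_lt_of_le Nat.zero_lt_two hm
  have hθpos : 0 < Real.pi / m := by positivity
  have hθle : Real.pi / m < Real.pi :=
    div_lt_self Real.pi_pos (by exact_mod_cast Nat.lt_of_lt_of_le Nat.one_lt_two hm)
  have hsin : 0 < Real.sin (Real.pi / m) := Real.sin_pos_of_pos_of_lt_pi hθpos hθle
  have hS : ∀ n : ℕ, n ≤ m → 0 ≤ Real.sin (n * (Real.pi / m)) / Real.sin (Real.pi / m) := by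
    intro n hn
    apply div_nonneg _ hsin.le
    apply Real.sin_nonneg_of_nonneg_of_le_pi
    · positivity
    · rw [mul_div_assoc', div_le_iff₀ hm0]
      have : (n:ℝ) ≤ m := by exact_mod_cast hn
      nlinarith [Real.pi_pos]
  have h1 := hS (j+1) (by exact_mod_cast hj)
  have h2 := hS j (le_trans (Nat.le_succ j) hj)
  push_cast at h1
  rcases Nat.even_or_odd j with hj' | hj'
  · have hj1 : Even j := hj'
    refine ⟨_, _, ?_, ?_, dvec_formula_fin k s t hst m hm h2t h2s hkst hkts j⟩ <;>
      rw [if_pos hj1]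
    · exact h1
    · exact h2
  · have hj1 : ¬ Even j := Nat.not_even_iff_odd.mpr hj'
    refine ⟨_, _, ?_, ?_, dvec_formula_fin k s t hst m hm h2t h2s hkst hkts j⟩ <;>
      rw [if_neg hj1]
    · exact h2
    · exact h1

lemma dvec_ex_inf (k : B → B → ℝ) (s t : B) (hst : s ≠ t)
    (h2t : k t t = 2) (h2s : k s s = 2)
    (hkst : k s t ≤ -2) (hkts : k t s = k s t) (j : ℕ) :
    ∃ a b : ℝ, 0 ≤ a ∧ 0 ≤ b ∧ (if Even j then b ≤ a else a ≤ b) ∧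
      dvec k s t j = a • (Pi.single s 1 : B → ℝ) + b • (Pi.single t 1 : B → ℝ) := by
  have key : ∀ (x : B) (w : B → ℝ), reflMap k x w = w - formL k x w • (Pi.single x 1 : B → ℝ) :=
    fun _ _ => rfl
  induction j with
  | zero =>
    refine ⟨1, 0, zero_le_one, le_refl 0, by simp, by simp [dvec]⟩
  | succ j ih =>
    obtain ⟨a, b, ha, hb, hab, heq⟩ := ih
    rcases Nat.even_or_odd j with hj | hj
    · have hj1 : ¬ Even (j + 1) := by simp [Nat.even_add_one, hj]
      rw [if_pos hj] at hab
      refine ⟨a, -(k s t) * a - b, ha, by nlinarith, by rw [if_neg hj1]; nlinarith, ?_⟩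
      simp only [dvec, if_pos hj, heq, key, map_add, map_smul, formL_single, hkts, h2t,
        smul_eq_mul]
      match_scalars <;> ring
    · have hj' : ¬ Even j := Nat.not_even_iff_odd.mpr hj
      have hj1 : Even (j + 1) := Nat.even_add_one.mpr hj'
      rw [if_neg hj'] at hab
      refine ⟨-(k s t) * b - a, b, by nlinarith, hb, by rw [if_pos hj1]; nlinarith, ?_⟩
      simp only [dvec, if_neg hj', heq, key, map_add, map_smul, formL_single, hkst, h2s,
        smul_eq_mul]
      match_scalars <;> ring

end RealDihedral2

section WordComb

variable {B : Type*} [DecidableEq B]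
variable {W : Type*} [Group W] {M : CoxeterMatrix B} (cs : CoxeterSystem M W)

/-- A reduced word has no two adjacent equal letters. -/
lemma isReduced_chain' : ∀ ω : List B, cs.IsReduced ω → ω.Chain' (· ≠ ·) := by
  intro ω
  induction ω with
  | nil => intro _; exact List.isChain_nil
  | cons a tl ih =>
    intro h
    have htl : cs.IsReduced tl := by
      have := h.drop 1
      simpa using this
    show List.IsChain _ _
    rw [List.isChain_cons]
    refine ⟨?_, ih htl⟩
    intro b hb hab
    rcases tl with _ | ⟨b', rest⟩
    · simp at hb
    · have hbb : b' = b := by simpa using hb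
      subst hbb
      subst hab
      have hwp : cs.wordProd (a :: a :: rest) = cs.wordProd rest := by
        rw [cs.wordProd_cons, cs.wordProd_cons, cs.simple_mul_simple_cancel_left]
      have h1 : cs.length (cs.wordProd (a :: a :: rest)) ≤ rest.length := by
        rw [hwp]; exact cs.length_wordProd_le rest
      replace h : cs.length (cs.wordProd (a :: a :: rest)) = (a :: a :: rest).length := h
      simp only [List.length_cons] at h
      omega

/-- An alternating-type word ending in `t` is an alternating word. -/
lemma eq_alternatingWord (s t : B) (hst : s ≠ t) :
    ∀ l : List B, (∀ i ∈ l, i = s ∨ i = t) → l.Chain' (· ≠ ·) →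
      (l ≠ [] → l.getLast? = some t) → l = CoxeterSystem.alternatingWord s t l.length := by
  intro l
  induction l with
  | nil => intro _ _ _; rfl
  | cons a tl ih =>
    intro hmem hch hlast
    rcases tl with _ | ⟨b, rest⟩
    · have : a = t := by
        have := hlast (by simp)
        simpa using this
      rw [this]
      rw [show ([t] : List B).length = 0 + 1 from rfl, CoxeterSystem.alternatingWord_succ']
      simp [CoxeterSystem.alternatingWord]
    · have hmem' : ∀ i ∈ (b :: rest), i = s ∨ i = t := fun i hi => hmem i (List.mem_cons_of_mem a hi)
      have hch' : (b :: rest).Chain' (· ≠ ·) := (List.isChain_cons.mp hch).2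
      have hlast' : (b :: rest) ≠ [] → (b :: rest).getLast? = some t := by
        intro _
        rw [← hlast (by simp)]
        simp [List.getLast?]
      have htl := ih hmem' hch' hlast'
      have hne : a ≠ b := by
        have := (List.isChain_cons.mp hch).1
        exact this b (by simp)
      rcases rest with _ | ⟨c, rest'⟩
      · -- tl = [b]; b = t from htl
        have hb : b = t := by
          have := htl
          rw [show ([b] : List B).length = 0 + 1 from rfl, CoxeterSystem.alternatingWord_succ'] at this
          simpa [CoxeterSystem.alternatingWord] using this
      -- a ≠ t and a ∈ {s,t} so a = s
        have ha : a = s := by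
          rcases hmem a (by simp) with h | h
          · exact h
          · exact absurd (h.trans hb.symm) hne
        rw [ha, hb]
        rw [show ([s, t] : List B).length = 1 + 1 from rfl, CoxeterSystem.alternatingWord_succ']
        rw [if_neg (by decide : ¬ Even 1)]
        rw [show (1 : ℕ) = 0 + 1 from rfl, CoxeterSystem.alternatingWord_succ']
        simp [CoxeterSystem.alternatingWord]
      · -- tl has length ≥ 2
        set n := (c :: rest').length with hn
        have hlen : (b :: c :: rest').length = n + 1 := by simp [hn]
        rw [hlen] at htl
        rw [CoxeterSystem.alternatingWord_succ'] at htl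
        have hb : b = (if Even n then t else s) := by
          have := congrArg List.head? htl
          simpa using this
        have ha : a = (if Even (n+1) then t else s) := by
          rcases Nat.even_or_odd n with hev | hod
          · have hbt : b = t := by rw [hb, if_pos hev]
            have : a = s := by
              rcases hmem a (by simp) with h | h
              · exact h
              · exact absurd (h.trans hbt.symm) hne
            rw [this, if_neg (by simp [Nat.even_add_one, hev])]
          · have hbs : b = s := by rw [hb, if_neg (Nat.not_even_iff_odd.mpr hod)]
            have : a = t := by
              rcases hmem a (by simp) with h | h
              · exact absurd (h.trans hbs.symm) hne
              · exact h
            rw [this, if_pos (Nat.even_add_one.mpr (Nat.not_even_iff_odd.mpr hod))]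
        have hgoal : a :: b :: c :: rest' = CoxeterSystem.alternatingWord s t (n + 1 + 1) := by
          rw [CoxeterSystem.alternatingWord_succ' s t (n+1), ← ha]
          congr 1
          rw [htl, ← CoxeterSystem.alternatingWord_succ']
        rw [hgoal]
        simp [hn]

end WordComb

section MainPos

variable {B : Type*} [Fintype B] [DecidableEq B]
variable {W : Type*} [Group W] {M : CoxeterMatrix B} (cs : CoxeterSystem M W)
variable (k : B → B → ℝ) (hk2 : ∀ x, k x x = 2)
variable (τ : W →* ((B → ℝ) ≃ₗ[ℝ] (B → ℝ)))

lemma tau_alt_dvec (hτ : ∀ x, τ (cs.simple x) = reflE k x (hk2 x)) (s t : B) :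
    ∀ j, τ (cs.wordProd (CoxeterSystem.alternatingWord s t j)) (Pi.single s 1) = dvec k s t j := by
  intro j
  induction j with
  | zero =>
    show τ (cs.wordProd []) (Pi.single s 1) = _
    rw [cs.wordProd_nil, map_one]
    rfl
  | succ j ih =>
    rw [CoxeterSystem.alternatingWord_succ', cs.wordProd_cons, map_mul]
    have hmul : ∀ (a b : (B → ℝ) ≃ₗ[ℝ] (B → ℝ)) v, (a * b) v = a (b v) := fun _ _ _ => rfl
    rw [hmul, ih, hτ]
    rfl

theorem tau_pos (hsym : ∀ x y, k x y = k y x)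
    (hfin : ∀ s t : B, s ≠ t → M s t ≠ 0 → k s t = -2 * Real.cos (Real.pi / (M s t)))
    (hinf : ∀ s t : B, s ≠ t → M s t = 0 → k s t ≤ -2)
    (hτ : ∀ x, τ (cs.simple x) = reflE k x (hk2 x)) :
    ∀ (n : ℕ) (w : W), cs.length w = n → ∀ s : B, ¬ cs.IsRightDescent w s →
      ∀ x : B, 0 ≤ τ w (Pi.single s 1) x := by
  intro n
  induction n using Nat.strong_induction_on with
  | _ n IH =>
  intro w hw s hs x
  rcases eq_or_ne w 1 with rfl | hw1
  · rw [map_one]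
    show (0:ℝ) ≤ (Pi.single s 1 : B → ℝ) x
    by_cases hxs : x = s
    · subst hxs; simp
    · rw [Pi.single_eq_of_ne hxs]
  · obtain ⟨t, ht⟩ := cs.exists_rightDescent_of_ne_one hw1
    have ht' : cs.length (w * cs.simple t) < cs.length w := ht
    have hts : t ≠ s := by rintro rfl; exact hs ht
    set S : Set ℕ := {nn | ∃ (u : W) (l : List B), cs.length u = nn ∧
      (∀ i ∈ l, i = s ∨ i = t) ∧ w = u * cs.wordProd l ∧ cs.length w = nn + l.length} with hS
    have hQt : cs.length (w * cs.simple t) ∈ S := by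
      have hd : cs.length (w * cs.simple t) + 1 = cs.length w :=
        (cs.length_mul_simple w t).resolve_left (by omega)
      refine ⟨w * cs.simple t, [t], rfl, by simp, ?_, ?_⟩
      · rw [cs.wordProd_singleton, cs.simple_mul_simple_cancel_right]
      · simp only [List.length_singleton]; omega
    have hne : S.Nonempty := ⟨_, hQt⟩
    obtain ⟨u, l, hu, hlmem, hul, hlen⟩ := Nat.sInf_mem hne
    have hn₀le : sInf S ≤ cs.length (w * cs.simple t) := Nat.sInf_le hQt
    have hn₀lt : sInf S < n := by omega
    have hmin : ∀ y : B, y = s ∨ y = t → ¬ cs.IsRightDescent u y := by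
      intro y hy hdesc
      have hdesc' : cs.length (u * cs.simple y) < cs.length u := hdesc
      have hd : cs.length (u * cs.simple y) + 1 = cs.length u :=
        (cs.length_mul_simple u y).resolve_left (by omega)
      apply Nat.notMem_of_lt_sInf (s := S) (show cs.length (u * cs.simple y) < sInf S by omega)
      have hw2 : w = (u * cs.simple y) * cs.wordProd (y :: l) := by
        rw [cs.wordProd_cons, ← mul_assoc, mul_assoc _ _ (cs.simple y),
          cs.simple_mul_simple_self, mul_one]
        exact hul
      refine ⟨u * cs.simple y, y :: l, rfl, ?_, hw2, ?_⟩
      · intro i hi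
        rcases List.mem_cons.mp hi with rfl | hi
        · exact hy
        · exact hlmem i hi
      · have h1 : cs.length w ≤ cs.length (u * cs.simple y) + cs.length (cs.wordProd (y :: l)) := by
          rw [hw2]; exact cs.length_mul_le _ _
        have h2 : cs.length (cs.wordProd (y :: l)) ≤ l.length + 1 := by
          have := cs.length_wordProd_le (y :: l)
          simpa using this
        simp only [List.length_cons]
        omega
    have hws : cs.length (w * cs.simple s) = cs.length w + 1 := by
      have hd := cs.length_mul_simple w s
      have hnd : ¬ cs.length (w * cs.simple s) < cs.length w := hs
      omega
    have hw3 : w * cs.simple s = u * cs.wordProd (l.concat s) := by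
      rw [cs.wordProd_concat, ← mul_assoc, hul]
    have hred : cs.length (cs.wordProd (l.concat s)) = l.length + 1 := by
      have h1 : cs.length (w * cs.simple s) ≤ cs.length u + cs.length (cs.wordProd (l.concat s)) := by
        rw [hw3]; exact cs.length_mul_le _ _
      have h2 : cs.length (cs.wordProd (l.concat s)) ≤ l.length + 1 := by
        have := cs.length_wordProd_le (l.concat s)
        simpa [List.length_concat] using this
      omega
    have hredl : cs.IsReduced (l.concat s) := by
      show cs.length _ = _
      rw [hred, List.length_concat]
    have hchain := isReduced_chain' cs _ hredl
    have hmem2 : ∀ i ∈ l.concat s, i = t ∨ i = s := by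
      intro i hi
      rw [List.concat_eq_append] at hi
      rcases List.mem_append.mp hi with hi | hi
      · exact (hlmem i hi).symm
      · right; simpa using hi
    have halt : l.concat s = CoxeterSystem.alternatingWord t s (l.concat s).length :=
      eq_alternatingWord t s hts _ hmem2 hchain (fun _ => by simp [List.getLast?_concat])
    have hlalt : l = CoxeterSystem.alternatingWord s t l.length := by
      have h := halt
      rw [List.length_concat, CoxeterSystem.alternatingWord_succ] at h
      rw [List.concat_eq_append, List.concat_eq_append] at h
      exact List.append_cancel_right h
    have hbound : M s t ≠ 0 → l.length + 1 ≤ M s t := by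
      intro hM0
      by_contra hgt
      push_neg at hgt
      have hMts : M t s = M s t := M.symmetric t s
      have hnred := cs.not_isReduced_alternatingWord t s (m := l.length + 1)
        (by rw [hMts]; exact hM0) (by rw [hMts]; omega)
      rw [← show (l.concat s).length = l.length + 1 from List.length_concat .., ← halt] at hnred
      exact hnred hredl
    obtain ⟨a, b, ha, hb, hdv⟩ : ∃ a b : ℝ, 0 ≤ a ∧ 0 ≤ b ∧
        dvec k s t l.length = a • (Pi.single s 1 : B → ℝ) + b • (Pi.single t 1 : B → ℝ) := by
      rcases eq_or_ne (M s t) 0 with hM | hM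
      · obtain ⟨a, b, ha, hb, _, h⟩ := dvec_ex_inf k s t hts.symm (hk2 t) (hk2 s)
          (hinf s t hts.symm hM) (hsym t s) l.length
        exact ⟨a, b, ha, hb, h⟩
      · have hm1 : M s t ≠ 1 := M.off_diagonal s t hts.symm
        have hm2 : 2 ≤ M s t := by omega
        exact dvec_ex_fin k s t hts.symm (M s t) hm2 (hk2 t) (hk2 s)
          (hfin s t hts.symm hM) (hsym t s) l.length (hbound hM)
    have hτl := tau_alt_dvec cs k hk2 τ hτ s t l.length
    rw [← hlalt] at hτl
    have hmul : ∀ (f g : (B → ℝ) ≃ₗ[ℝ] (B → ℝ)) v, (f * g) v = f (g v) := fun _ _ _ => rfl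
    have hfinal : τ w (Pi.single s 1) = a • (τ u (Pi.single s 1)) + b • (τ u (Pi.single t 1)) := by
      rw [hul, map_mul, hmul, hτl, hdv, map_add, map_smul, map_smul]
    rw [hfinal]
    have h1 := IH (sInf S) hn₀lt u hu s (hmin s (Or.inl rfl)) x
    have h2 := IH (sInf S) hn₀lt u hu t (hmin t (Or.inr rfl)) x
    simp only [Pi.add_apply, Pi.smul_apply, smul_eq_mul]
    exact add_nonneg (mul_nonneg ha h1) (mul_nonneg hb h2)

end MainPos

section Faithful

variable {B : Type*} [Fintype B] [DecidableEq B]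
variable {W : Type*} [Group W] {M : CoxeterMatrix B} (cs : CoxeterSystem M W)
variable (k : B → B → ℝ) (hk2 : ∀ x, k x x = 2)
variable (τ : W →* ((B → ℝ) ≃ₗ[ℝ] (B → ℝ)))

theorem tau_faithful (hsym : ∀ x y, k x y = k y x)
    (hfin : ∀ s t : B, s ≠ t → M s t ≠ 0 → k s t = -2 * Real.cos (Real.pi / (M s t)))
    (hinf : ∀ s t : B, s ≠ t → M s t = 0 → k s t ≤ -2)
    (hτ : ∀ x, τ (cs.simple x) = reflE k x (hk2 x)) :
    ∀ w : W, τ w = 1 → w = 1 := by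
  intro w hwone
  by_contra hw1
  obtain ⟨t, ht⟩ := cs.exists_rightDescent_of_ne_one hw1
  have ht' : cs.length (w * cs.simple t) < cs.length w := ht
  have hnd : ¬ cs.IsRightDescent (w * cs.simple t) t := by
    intro h
    have h' : cs.length ((w * cs.simple t) * cs.simple t) < cs.length (w * cs.simple t) := h
    rw [cs.simple_mul_simple_cancel_right] at h'
    omega
  have hpos := tau_pos cs k hk2 τ hsym hfin hinf hτ _ (w * cs.simple t) rfl t hnd t
  have hrefl : τ (cs.simple t) (Pi.single t 1) = -(Pi.single t 1) := by
    rw [hτ]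
    have key : ∀ (w' : B → ℝ), reflE k t (hk2 t) w' =
        w' - formL k t w' • (Pi.single t 1 : B → ℝ) := fun _ => rfl
    rw [key, formL_single, hk2]
    match_scalars
    ring
  have hmul : ∀ (f g : (B → ℝ) ≃ₗ[ℝ] (B → ℝ)) v, (f * g) v = f (g v) := fun _ _ _ => rfl
  have hww : w = (w * cs.simple t) * cs.simple t := (cs.simple_mul_simple_cancel_right t).symm
  have hval : τ w (Pi.single t 1) = -(τ (w * cs.simple t) (Pi.single t 1)) := by
    conv_lhs => rw [hww]
    rw [map_mul, hmul, hrefl, map_neg]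
  have h1 : τ w (Pi.single t 1) t = 1 := by
    rw [hwone]
    show (Pi.single t 1 : B → ℝ) t = 1
    simp
  rw [hval] at h1
  have : (0:ℝ) ≤ τ (w * cs.simple t) (Pi.single t 1) t := hpos
  simp only [Pi.neg_apply] at h1
  linarith

end Faithful

theorem fusion_Tits_representation_faithful
    {B : Type*} [Fintype B] [DecidableEq B] (M : CoxeterMatrix B)
    {W : Type*} [Group W] (cs : CoxeterSystem M W)
    (R : Type*) [CommRing R] (φ : R →+* ℝ)
    (c : B → B → R)
    (hsymm : ∀ s t, c s t = c t s)
    (hdiag : ∀ s, c s s = 2)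
    (hcheb : ∀ s t, s ≠ t → M s t ≠ 0 → Polynomial.aeval (c s t) (cheb (M s t - 1)) = 0)
    (hφfin : ∀ s t, s ≠ t → M s t ≠ 0 →
      φ (c s t) = -2 * Real.cos (Real.pi / (M s t)))
    (hφinf : ∀ s t, s ≠ t → M s t = 0 → φ (c s t) ≤ -2) :
    ∃ ρ : W →* ((B → R) ≃ₗ[R] (B → R)),
      (∀ (s : B) (v : B → R),
        ρ (cs.simple s) v = v - (∑ t, c s t * v t) • (Pi.single s (1 : R) : B → R)) ∧
      Function.Injective ρ := by
  classical
  -- the representation over R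
  set f : B → ((B → R) ≃ₗ[R] (B → R)) := fun s => reflE c s (hdiag s) with hf
  have hlift : CoxeterMatrix.IsLiftable M f := by
    intro s t
    rcases eq_or_ne s t with rfl | hst
    · rw [M.diagonal, pow_one]
      exact reflE_sq c s (hdiag s)
    · rcases eq_or_ne (M s t) 0 with h0 | h0
      · rw [h0, pow_zero]
      · exact braid_pow c s t (hdiag s) (hdiag t) ((hsymm s t).symm) (M s t) h0
          (hcheb s t hst h0)
  set ρ : W →* ((B → R) ≃ₗ[R] (B → R)) := cs.lift ⟨f, hlift⟩ with hρ
  have hρs : ∀ s, ρ (cs.simple s) = f s := fun s => cs.lift_apply_simple hlift s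
  -- the real representation
  set k : B → B → ℝ := fun s t => φ (c s t) with hk
  have hk2 : ∀ x, k x x = 2 := by
    intro x
    show φ (c x x) = 2
    rw [hdiag x]
    exact map_ofNat φ 2
  have hksym : ∀ x y, k x y = k y x := fun x y => by
    show φ (c x y) = φ (c y x); rw [hsymm x y]
  have hkfin : ∀ s t : B, s ≠ t → M s t ≠ 0 → k s t = -2 * Real.cos (Real.pi / (M s t)) :=
    fun s t h h0 => hφfin s t h h0
  have hkinf : ∀ s t : B, s ≠ t → M s t = 0 → k s t ≤ -2 :=
    fun s t h h0 => hφinf s t h h0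
  have hkcheb : ∀ s t : B, s ≠ t → M s t ≠ 0 →
      Polynomial.aeval (k s t) (cheb (M s t - 1)) = 0 := by
    intro s t h h0
    have h2 := (Polynomial.aeval_algHom_apply φ.toIntAlgHom (c s t) (cheb (M s t - 1))).symm
    show Polynomial.aeval (φ (c s t)) (cheb (M s t - 1)) = 0
    have h3 : φ.toIntAlgHom (c s t) = φ (c s t) := rfl
    rw [← h3, ← h2]
    show φ.toIntAlgHom (Polynomial.aeval (c s t) (cheb (M s t - 1))) = 0
    rw [hcheb s t h h0, map_zero]
  set g : B → ((B → ℝ) ≃ₗ[ℝ] (B → ℝ)) := fun s => reflE k s (hk2 s) with hg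
  have hliftg : CoxeterMatrix.IsLiftable M g := by
    intro s t
    rcases eq_or_ne s t with rfl | hst
    · rw [M.diagonal, pow_one]
      exact reflE_sq k s (hk2 s)
    · rcases eq_or_ne (M s t) 0 with h0 | h0
      · rw [h0, pow_zero]
      · exact braid_pow k s t (hk2 s) (hk2 t) ((hksym s t).symm) (M s t) h0
          (hkcheb s t hst h0)
  set τ : W →* ((B → ℝ) ≃ₗ[ℝ] (B → ℝ)) := cs.lift ⟨g, hliftg⟩ with hτdef
  have hτs : ∀ s, τ (cs.simple s) = g s := fun s => cs.lift_apply_simple hliftg s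
  -- intertwining along φ
  have hmulR : ∀ (a b : (B → R) ≃ₗ[R] (B → R)) v, (a * b) v = a (b v) := fun _ _ _ => rfl
  have hmulRe : ∀ (a b : (B → ℝ) ≃ₗ[ℝ] (B → ℝ)) v, (a * b) v = a (b v) := fun _ _ _ => rfl
  have hφsingle : ∀ (a x : B), φ ((Pi.single a 1 : B → R) x) = (Pi.single a 1 : B → ℝ) x := by
    intro a x
    by_cases hxa : x = a
    · subst hxa; rw [Pi.single_eq_same, Pi.single_eq_same, map_one]
    · rw [Pi.single_eq_of_ne hxa, Pi.single_eq_of_ne hxa, map_zero]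
  have hsimple : ∀ (a : B) (v : B → R),
      (fun x => φ (f a v x)) = g a (fun x => φ (v x)) := by
    intro a v
    funext x
    have hfa : f a v = v - (∑ t, c a t * v t) • (Pi.single a 1 : B → R) := rfl
    have hga : ∀ w : B → ℝ, g a w = w - (∑ t, k a t * w t) • (Pi.single a 1 : B → ℝ) :=
      fun _ => rfl
    rw [hfa, hga]
    simp only [Pi.sub_apply, Pi.smul_apply, smul_eq_mul, map_sub, map_mul, map_sum]
    rw [hφsingle]
  have hint : ∀ (w : W) (v : B → R), (fun x => φ (ρ w v x)) = τ w (fun x => φ (v x)) := by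
    intro w
    obtain ⟨ω, rfl⟩ := cs.wordProd_surjective w
    induction ω with
    | nil =>
      intro v
      rw [cs.wordProd_nil, map_one, map_one]
      rfl
    | cons a tl ih =>
      intro v
      rw [cs.wordProd_cons, map_mul, map_mul, hmulR, hmulRe, hρs, hτs, ← ih v, hsimple]
  -- injectivity
  have hinj : ∀ w : W, ρ w = 1 → w = 1 := by
    intro w hwone
    apply tau_faithful cs k hk2 τ hksym hkfin hkinf hτs w
    have hbasis : ∀ t : B, τ w (Pi.single t 1) = Pi.single t 1 := by
      intro t
      have h := hint w (Pi.single t (1:R))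
      rw [hwone] at h
      have h1 : (fun x => φ ((1 : (B → R) ≃ₗ[R] (B → R)) (Pi.single t 1) x))
          = (Pi.single t 1 : B → ℝ) := by
        funext x
        exact hφsingle t x
      have h2 : (fun x => φ ((Pi.single t (1:R) : B → R) x)) = (Pi.single t 1 : B → ℝ) := by
        funext x
        exact hφsingle t x
      rw [h1, h2] at h
      exact h.symm
    apply LinearEquiv.toLinearMap_injective
    apply Module.Basis.ext (Pi.basisFun ℝ B)
    intro i
    simp only [Pi.basisFun_apply, LinearEquiv.coe_coe, Module.End.one_apply]
    exact hbasis i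
  exact ⟨ρ, fun s v => by rw [hρs]; rfl, (injective_iff_map_eq_one ρ).mpr hinj⟩
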